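/- arXiv:math/0210451 — 3 statements merged into one kernel-verified Lean document; each statement's English description precedes it below -/
import Mathlib

section
/- There is no Weyl-like element for the lattice Γ^{2,2}: for every ρ ∈ ℤ⁴ there exists a lattice root α ∈ ℤ⁴ (i.e. α = (k,l,m,n) with kl + mn = -1) such that B(ρ,α) = 0. -/
/-- The bilinear form of the even self-dual lattice `Γ^{2,2}`:
`B(x,y) = -(x₁y₂ + x₂y₁) - (x₃y₄ + x₄y₃)`. -/
def GammaB (x y : Fin 4 → ℤ) : ℤ :=
  -(x 0 * y 1 + x 1 * y 0) - (x 2 * y 3 + x 3 * y 2)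

/-- A lattice root of `Γ^{2,2}`: an element `(k,l,m,n)` with `kl + mn = -1`,
equivalently of norm `B(α,α) = 2`. -/
def IsLatticeRoot (α : Fin 4 → ℤ) : Prop :=
  α 0 * α 1 + α 2 * α 3 = -1

/-- Scalar version of the statement: for `ρ = (a,b,c,d)` there is a root
`(k,l,m,n)` (so `kl + mn = -1`) orthogonal to `ρ`, i.e. `al + bk + cn + dm = 0`. -/
def Pw (a b c d : ℤ) : Prop :=
  ∃ k l m n : ℤ, k * l + m * n = -1 ∧ a * l + b * k + c * n + d * m = 0

lemma base1 (a b : ℤ) : Pw a b 0 0 :=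
  ⟨a, -b, a * b - 1, 1, by ring, by ring⟩

lemma base2 (b d : ℤ) : Pw 0 b 0 d := by
  by_cases hb : b = 0
  · exact ⟨1, -1, 0, 0, by ring, by rw [hb]; ring⟩
  · set G : ℤ := (Int.gcd b d : ℤ) with hG
    have hGb : G ∣ b := Int.gcd_dvd_left b d
    have hGd : G ∣ d := Int.gcd_dvd_right b d
    have hpos : 0 < Int.gcd b d := Int.gcd_pos_of_ne_zero_left d hb
    have h4 : IsCoprime (b / G) (d / G) :=
      Int.isCoprime_iff_gcd_eq_one.mpr (Int.gcd_div_gcd_div_gcd hpos)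
    obtain ⟨u, v, huv⟩ := h4
    have e1 : G * (b / G) = b := Int.mul_ediv_cancel' hGb
    have e2 : G * (d / G) = d := Int.mul_ediv_cancel' hGd
    refine ⟨d / G, -v, -(b / G), u, by linear_combination -huv, ?_⟩
    linear_combination (b / G) * e2 - (d / G) * e1

lemma tT (t a b c d : ℤ) (h : Pw a (b - t * d) (c + t * a) d) : Pw a b c d := by
  obtain ⟨k, l, m, n, h1, h2⟩ := h
  exact ⟨k, l + t * n, m - t * k, n, by linear_combination h1, by linear_combination h2⟩

lemma tU (t a b c d : ℤ) (h : Pw a (b - t * c) c (d + t * a)) : Pw a b c d := by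
  obtain ⟨k, l, m, n, h1, h2⟩ := h
  exact ⟨k, l + t * m, m, n - t * k, by linear_combination h1, by linear_combination h2⟩

lemma tV (t a b c d : ℤ) (h : Pw (a - t * d) b (c + t * b) d) : Pw a b c d := by
  obtain ⟨k, l, m, n, h1, h2⟩ := h
  exact ⟨k + t * n, l, m - t * l, n, by linear_combination h1, by linear_combination h2⟩

lemma tX (t a b c d : ℤ) (h : Pw (a + t * c) b c (d - t * b)) : Pw a b c d := by
  obtain ⟨k, l, m, n, h1, h2⟩ := h
  exact ⟨k - t * m, l, m, n + t * l, by linear_combination h1, by linear_combination h2⟩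

lemma tS (a b c d : ℤ) (h : Pw c d a b) : Pw a b c d := by
  obtain ⟨k, l, m, n, h1, h2⟩ := h
  exact ⟨m, n, k, l, by linear_combination h1, by linear_combination h2⟩

/-- Euclidean step: clear the third coordinate, given an oracle for vectors of the
form `(a₂, b₂, 0, d₂)` with `|a₂| ≤ |a|`. -/
lemma Eaux : ∀ (N : ℕ) (a b c d : ℤ), a ≠ 0 → a.natAbs + c.natAbs ≤ N →
    (∀ a₂ b₂ d₂ : ℤ, a₂.natAbs ≤ a.natAbs → Pw a₂ b₂ 0 d₂) → Pw a b c d := by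
  intro N
  induction N using Nat.strong_induction_on with
  | _ N IH =>
  intro a b c d ha hN oracle
  by_cases hc : c = 0
  · subst hc; exact oracle a b d le_rfl
  · by_cases hsz : a.natAbs ≤ c.natAbs
    · -- reduce c modulo a
      have hmod0 : 0 ≤ c % a := Int.emod_nonneg c ha
      have hmod1 : c % a < |a| := by rw [Int.abs_eq_natAbs]; exact Int.emod_lt c ha
      have hlt : (c % a).natAbs < a.natAbs := by
        rw [Int.abs_eq_natAbs] at hmod1; omega
      have key : c + -(c / a) * a = c % a := by
        linear_combination (-1 : ℤ) * Int.mul_ediv_add_emod c a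
      apply tT (-(c / a))
      rw [key]
      exact IH (a.natAbs + (c % a).natAbs) (by omega) a _ (c % a) d ha le_rfl oracle
    · -- reduce a modulo c
      push_neg at hsz
      have hmod0 : 0 ≤ a % c := Int.emod_nonneg a hc
      have hmod1 : a % c < |c| := by rw [Int.abs_eq_natAbs]; exact Int.emod_lt a hc
      have hlt : (a % c).natAbs < c.natAbs := by
        rw [Int.abs_eq_natAbs] at hmod1; omega
      have key : a + -(a / c) * c = a % c := by
        linear_combination (-1 : ℤ) * Int.mul_ediv_add_emod a c
      apply tX (-(a / c))
      rw [key]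
      by_cases hz : a % c = 0
      · rw [hz]
        apply tS
        exact oracle c _ b (le_of_lt hsz)
      · exact IH ((a % c).natAbs + c.natAbs) (by omega) (a % c) b c _ hz le_rfl
          (fun a₂ b₂ d₂ h₂ => oracle a₂ b₂ d₂ (le_trans h₂ (by omega)))

/-- Solve the problem for vectors of the form `(a, b, 0, d)`. -/
lemma Flem : ∀ (N : ℕ) (a b d : ℤ), a.natAbs ≤ N → Pw a b 0 d := by
  intro N
  induction N using Nat.strong_induction_on with
  | _ N IH =>
  intro a b d hN
  by_cases ha : a = 0
  · subst ha; exact base2 b d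
  by_cases hd : d = 0
  · subst hd; exact base1 a b
  -- reduce d modulo a (clean move: third coordinate stays 0)
  have key : d + -(d / a) * a = d % a := by
    linear_combination (-1 : ℤ) * Int.mul_ediv_add_emod d a
  have hmod0 : 0 ≤ d % a := Int.emod_nonneg d ha
  have hmod1 : (d % a).natAbs < a.natAbs := by
    have := Int.emod_lt d ha; omega
  apply tU (-(d / a))
  rw [key]
  set d' := d % a with hd'def
  by_cases hz : d' = 0
  · rw [hz]; exact base1 a _
  · -- find t₂, a' with a - t₂ * d' = a', 0 < a', |a'| ≤ |d'|
    have hstep : ∃ t₂ a' : ℤ, a - t₂ * d' = a' ∧ 0 < a' ∧ a'.natAbs ≤ d'.natAbs := by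
      have hm0 : 0 ≤ a % d' := Int.emod_nonneg a hz
      have hm1 : a % d' < |d'| := by rw [Int.abs_eq_natAbs]; exact Int.emod_lt a hz
      have hid : d' * (a / d') + a % d' = a := Int.mul_ediv_add_emod a d'
      by_cases he : a % d' = 0
      · rcases lt_or_gt_of_ne hz with hneg | hpos
        · refine ⟨a / d' + 1, -d', by linear_combination -hid + he, by omega, by omega⟩
        · refine ⟨a / d' - 1, d', by linear_combination -hid + he, hpos, le_rfl⟩
      · refine ⟨a / d', a % d', by linear_combination -hid, ?_, ?_⟩
        · omega
        · rw [Int.abs_eq_natAbs] at hm1; omega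
    obtain ⟨t₂, a', h1, h2, h3⟩ := hstep
    apply tV t₂
    rw [h1]
    refine Eaux (a'.natAbs + ((0 : ℤ) + t₂ * _).natAbs) a' _ _ d' (by omega) le_rfl ?_
    intro a₂ b₂ d₂ h₂
    have hlt2 : a'.natAbs < N := by omega
    exact IH a'.natAbs hlt2 a₂ b₂ d₂ h₂

lemma Pw_all (a b c d : ℤ) : Pw a b c d := by
  by_cases ha : a = 0
  · subst ha
    apply tS
    exact Flem c.natAbs c d b le_rfl
  · exact Eaux (a.natAbs + c.natAbs) a b c d ha le_rfl
      (fun a₂ b₂ d₂ _ => Flem a₂.natAbs a₂ b₂ d₂ le_rfl)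

/-- There is no Weyl-like element for `Γ^{2,2}`: every `ρ ∈ ℤ⁴` is orthogonal
(with respect to `B`) to some lattice root. -/
theorem no_weyl_like_element (ρ : Fin 4 → ℤ) :
    ∃ α : Fin 4 → ℤ, IsLatticeRoot α ∧ GammaB ρ α = 0 := by
  obtain ⟨k, l, m, n, h1, h2⟩ := Pw_all (ρ 0) (ρ 1) (ρ 2) (ρ 3)
  refine ⟨![k, l, m, n], ?_, ?_⟩
  · simp only [IsLatticeRoot, Matrix.cons_val_zero, Matrix.cons_val_one, Matrix.head_cons,
      Matrix.cons_val_two, Matrix.tail_cons, Matrix.cons_val_three]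
    linear_combination h1
  · simp only [GammaB, Matrix.cons_val_zero, Matrix.cons_val_one, Matrix.head_cons,
      Matrix.cons_val_two, Matrix.tail_cons, Matrix.cons_val_three]
    linear_combination -h2
end

section
/- For every 2×2 integer matrix A there exists a matrix R ∈ SL(2,ℤ) such that tr(R·A) = 0. -/
open Matrix

private def mkSL (a b c d : ℤ) (h : a * d - b * c = 1) :
    Matrix.SpecialLinearGroup (Fin 2) ℤ :=
  ⟨!![a, b; c, d], by simpa [Matrix.det_fin_two_of] using h⟩

private lemma mkSL_coe (a b c d : ℤ) (h : a * d - b * c = 1) :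
    (mkSL a b c d h : Matrix (Fin 2) (Fin 2) ℤ) = !![a, b; c, d] := rfl

private lemma key : ∀ g : ℕ, ∀ a b c d : ℤ, Int.gcd a c = g →
    ∃ (U V : Matrix.SpecialLinearGroup (Fin 2) ℤ) (e f : ℤ),
      (U : Matrix (Fin 2) (Fin 2) ℤ) * !![a, b; c, d] * (V : Matrix (Fin 2) (Fin 2) ℤ)
        = !![e, 0; 0, f] := by
  intro g
  induction g using Nat.strong_induction_on with
  | _ g ih =>
  intro a b c d hg
  by_cases hg0 : g = 0
  · subst hg0
    have ha : a = 0 := by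
      have := Int.gcd_eq_zero_iff.mp hg; exact this.1
    have hc : c = 0 := by
      have := Int.gcd_eq_zero_iff.mp hg; exact this.2
    subst ha; subst hc
    -- matrix is !![0,b;0,d]; handle column (b,d)
    by_cases hbd : Int.gcd b d = 0
    · have hb : b = 0 := (Int.gcd_eq_zero_iff.mp hbd).1
      have hd : d = 0 := (Int.gcd_eq_zero_iff.mp hbd).2
      subst hb; subst hd
      exact ⟨1, 1, 0, 0, by norm_num⟩
    · set h : ℤ := (Int.gcd b d : ℤ) with hh
      have hne : h ≠ 0 := by rw [hh]; exact_mod_cast hbd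
      obtain ⟨b', hb'⟩ : h ∣ b := Int.gcd_dvd_left b d
      obtain ⟨d', hd'⟩ : h ∣ d := Int.gcd_dvd_right b d
      set x := Int.gcdA b d with hx
      set y := Int.gcdB b d with hy
      have hbez : b * x + d * y = h := (Int.gcd_eq_gcd_ab b d).symm
      have hdet : x * b' - y * (-d') = 1 := by
        have : h * (x * b' + y * d') = h * 1 := by
          rw [mul_one]
          calc h * (x * b' + y * d') = b * x + d * y := by
                rw [hb', hd']; ring
            _ = h := hbez
        have := mul_left_cancel₀ hne this
        linarith
      refine ⟨mkSL x y (-d') b' hdet, mkSL 0 1 (-1) 0 (by norm_num), -h, 0, ?_⟩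
      rw [mkSL_coe, mkSL_coe]
      have e1 : -d' * b + b' * d = 0 := by rw [hb', hd']; ring
      have e2 : x * b + y * d = h := by linarith
      ext i j
      fin_cases i <;> fin_cases j <;>
        simp [Matrix.mul_apply, Fin.sum_univ_succ] <;> linarith
  · -- g ≠ 0 : row-reduce first column
    have hgz : (g : ℤ) ≠ 0 := by exact_mod_cast hg0
    obtain ⟨a', ha'⟩ : (g : ℤ) ∣ a := hg ▸ Int.gcd_dvd_left a c
    obtain ⟨c', hc'⟩ : (g : ℤ) ∣ c := hg ▸ Int.gcd_dvd_right a c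
    set x := Int.gcdA a c with hx
    set y := Int.gcdB a c with hy
    have hbez : a * x + c * y = (g : ℤ) := by
      have := (Int.gcd_eq_gcd_ab a c).symm
      rw [hg] at this; exact this
    have hdet : x * a' - y * (-c') = 1 := by
      have : (g : ℤ) * (x * a' + y * c') = (g : ℤ) * 1 := by
        rw [mul_one]
        calc (g : ℤ) * (x * a' + y * c') = a * x + c * y := by
              rw [ha', hc']; ring
          _ = (g : ℤ) := hbez
      have := mul_left_cancel₀ hgz this
      linarith
    set U₁ := mkSL x y (-c') a' hdet with hU₁
    set b₁ := x * b + y * d with hb₁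
    set d₁ := -c' * b + a' * d with hd₁
    have hU₁A : (U₁ : Matrix (Fin 2) (Fin 2) ℤ) * !![a, b; c, d]
        = !![(g : ℤ), b₁; 0, d₁] := by
      rw [hU₁, mkSL_coe]
      have e1 : -c' * a + a' * c = 0 := by rw [ha', hc']; ring
      have e2 : x * a + y * c = (g : ℤ) := by linarith
      ext i j
      fin_cases i <;> fin_cases j <;>
        simp [Matrix.mul_apply, Fin.sum_univ_succ, hb₁, hd₁] <;> linarith
    by_cases hdvd : (g : ℤ) ∣ b₁
    · obtain ⟨k, hk⟩ := hdvd
      refine ⟨U₁, mkSL 1 (-k) 0 1 (by ring), (g : ℤ), d₁, ?_⟩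
      rw [hU₁A, mkSL_coe]
      ext i j
      fin_cases i <;> fin_cases j <;>
        simp [Matrix.mul_apply, Fin.sum_univ_succ] <;> linarith [hk]
    · -- column-reduce row (g, b₁)
      set h : ℤ := (Int.gcd (g : ℤ) b₁ : ℤ) with hh
      have hne : h ≠ 0 := by
        simp only [hh]
        exact_mod_cast fun h0 => hgz ((Int.gcd_eq_zero_iff.mp (by exact_mod_cast h0)).1)
      obtain ⟨g₁, hg₁⟩ : h ∣ (g : ℤ) := Int.gcd_dvd_left (g : ℤ) b₁
      obtain ⟨b₂, hb₂⟩ : h ∣ b₁ := Int.gcd_dvd_right (g : ℤ) b₁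
      set x₁ := Int.gcdA (g : ℤ) b₁ with hx₁
      set y₁ := Int.gcdB (g : ℤ) b₁ with hy₁
      have hbez₁ : (g : ℤ) * x₁ + b₁ * y₁ = h := (Int.gcd_eq_gcd_ab (g : ℤ) b₁).symm
      have hdet₁ : x₁ * g₁ - (-b₂) * y₁ = 1 := by
        have : h * (x₁ * g₁ + b₂ * y₁) = h * 1 := by
          rw [mul_one]
          calc h * (x₁ * g₁ + b₂ * y₁) = (g : ℤ) * x₁ + b₁ * y₁ := by
                rw [hg₁, hb₂]; ring
            _ = h := hbez₁
        have := mul_left_cancel₀ hne this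
        linarith
      set V₁ := mkSL x₁ (-b₂) y₁ g₁ hdet₁ with hV₁
      have hB : !![(g : ℤ), b₁; 0, d₁] * (V₁ : Matrix (Fin 2) (Fin 2) ℤ)
          = !![h, 0; d₁ * y₁, d₁ * g₁] := by
        rw [hV₁, mkSL_coe]
        have e1 : (g : ℤ) * (-b₂) + b₁ * g₁ = 0 := by rw [hg₁, hb₂]; ring
        ext i j
        fin_cases i <;> fin_cases j <;>
          simp [Matrix.mul_apply, Fin.sum_univ_succ] <;> linarith [hbez₁]
      -- the new gcd is smaller
      have hlt : Int.gcd h (d₁ * y₁) < g := by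
        have h1 : Int.gcd h (d₁ * y₁) ∣ h.natAbs := by
          have := Int.gcd_dvd_left (a := h) (b := d₁ * y₁)
          exact Int.natAbs_dvd_natAbs.mpr (by simpa using this)
        have hnat : h.natAbs = Int.gcd (g : ℤ) b₁ := by
          simp [hh]
        have h2 : h.natAbs ∣ g := by
          rw [hnat]
          have : (Int.gcd (g : ℤ) b₁ : ℤ) ∣ (g : ℤ) := Int.gcd_dvd_left (g : ℤ) b₁
          exact_mod_cast Int.ofNat_dvd.mp (by exact_mod_cast this)
        have h3 : h.natAbs ≠ g := by
          intro heq
          apply hdvd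
          have : ((g : ℕ) : ℤ) ∣ b₁ := by
            rw [← heq]
            exact (Int.natAbs_dvd).mpr (Int.gcd_dvd_right (g : ℤ) b₁)
          exact_mod_cast this
        have h4 : h.natAbs < g := Nat.lt_of_le_of_ne (Nat.le_of_dvd (Nat.pos_of_ne_zero hg0) h2) h3
        have h5 : Int.gcd h (d₁ * y₁) ≤ h.natAbs :=
          Nat.le_of_dvd (Int.natAbs_pos.mpr hne) h1
        omega
      obtain ⟨U', V', e, f, hUV⟩ :=
        ih _ hlt h 0 (d₁ * y₁) (d₁ * g₁) rfl
      refine ⟨U' * U₁, V₁ * V', e, f, ?_⟩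
      have : ((U' * U₁ : Matrix.SpecialLinearGroup (Fin 2) ℤ) : Matrix (Fin 2) (Fin 2) ℤ)
            * !![a, b; c, d]
            * ((V₁ * V' : Matrix.SpecialLinearGroup (Fin 2) ℤ) : Matrix (Fin 2) (Fin 2) ℤ)
          = (U' : Matrix (Fin 2) (Fin 2) ℤ)
            * (!![(g : ℤ), b₁; 0, d₁] * (V₁ : Matrix (Fin 2) (Fin 2) ℤ))
            * (V' : Matrix (Fin 2) (Fin 2) ℤ) := by
        rw [← hU₁A]
        simp [Matrix.SpecialLinearGroup.coe_mul, mul_assoc]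
      rw [this, hB, hUV]

/-- For every 2×2 integer matrix `A` there exists `R ∈ SL(2,ℤ)` with
`tr(R·A) = 0`. -/
theorem exists_SL2_trace_mul_eq_zero (A : Matrix (Fin 2) (Fin 2) ℤ) :
    ∃ R : Matrix.SpecialLinearGroup (Fin 2) ℤ,
      ((R : Matrix (Fin 2) (Fin 2) ℤ) * A).trace = 0 := by
  obtain ⟨U, V, e, f, hUV⟩ :=
    key (Int.gcd (A 0 0) (A 1 0)) (A 0 0) (A 0 1) (A 1 0) (A 1 1) rfl
  set J := mkSL 0 1 (-1) 0 (by norm_num) with hJ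
  refine ⟨V * J * U, ?_⟩
  have hc : ((V * J * U : Matrix.SpecialLinearGroup (Fin 2) ℤ) : Matrix (Fin 2) (Fin 2) ℤ)
      = (V : Matrix (Fin 2) (Fin 2) ℤ) * ((J : Matrix (Fin 2) (Fin 2) ℤ)
        * (U : Matrix (Fin 2) (Fin 2) ℤ)) := by
    simp [Matrix.SpecialLinearGroup.coe_mul, mul_assoc]
  rw [hc, mul_assoc, Matrix.trace_mul_comm]
  have hA : A = !![A 0 0, A 0 1; A 1 0, A 1 1] := Matrix.eta_fin_two A
  have hUV' : (U : Matrix (Fin 2) (Fin 2) ℤ) * A * (V : Matrix (Fin 2) (Fin 2) ℤ)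
      = !![e, 0; 0, f] := by rw [hA]; exact hUV
  have hassoc : (J : Matrix (Fin 2) (Fin 2) ℤ) * (U : Matrix (Fin 2) (Fin 2) ℤ) * A
      * (V : Matrix (Fin 2) (Fin 2) ℤ)
      = (J : Matrix (Fin 2) (Fin 2) ℤ)
        * ((U : Matrix (Fin 2) (Fin 2) ℤ) * A * (V : Matrix (Fin 2) (Fin 2) ℤ)) := by
    simp [mul_assoc]
  rw [hassoc, hUV', hJ, mkSL_coe, Matrix.trace_fin_two]
  simp [Matrix.mul_apply, Fin.sum_univ_succ]
end

section
/- For all real numbers b, d and every ε > 0 there exist coprime integers l, n such that |d·l - b·n| < ε. -/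
/-- For all real `b, d` and every `ε > 0` there exist coprime integers `l, n`
with `|d·l - b·n| < ε`. -/
theorem coprime_rational_approximation (b d : ℝ) (ε : ℝ) (hε : 0 < ε) :
    ∃ l n : ℤ, IsCoprime l n ∧ |d * (l : ℝ) - b * (n : ℝ)| < ε := by
  by_cases hb : b = 0
  · exact ⟨0, 1, isCoprime_zero_left.mpr isUnit_one, by simp [hb, hε]⟩
  · have hb' : 0 < |b| := abs_pos.mpr hb
    obtain ⟨N, hN⟩ := exists_nat_gt (|b| / ε)
    have hN0 : 0 < N + 1 := Nat.succ_pos N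
    obtain ⟨q, hq, _⟩ := Real.exists_rat_abs_sub_le_and_den_le (d / b) hN0
    refine ⟨(q.den : ℤ), q.num, ?_, ?_⟩
    · rw [Int.isCoprime_iff_gcd_eq_one, Int.gcd_comm]
      exact q.reduced
    · have hden : (0 : ℝ) < (q.den : ℝ) := by exact_mod_cast q.pos
      have key : |d / b - q| ≤ 1 / ((N + 1 + 1) * q.den) := by exact_mod_cast hq
      have : |d * (q.den : ℝ) - b * (q.num : ℝ)| = |b| * (q.den : ℝ) * |d / b - q| := by
        rw [← abs_of_pos hden, ← abs_mul, ← abs_mul]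
        congr 1
        rw [Rat.cast_def]
        have hd' : ((q.den : ℝ)) ≠ 0 := ne_of_gt hden
        field_simp
        rw [abs_of_pos hden]
      push_cast
      rw [this]
      calc |b| * (q.den : ℝ) * |d / b - q|
          ≤ |b| * (q.den : ℝ) * (1 / ((N + 1 + 1) * q.den)) := by
            apply mul_le_mul_of_nonneg_left key
            positivity
        _ = |b| / (N + 1 + 1) := by field_simp
        _ < ε := by
            rw [div_lt_iff₀ (by positivity)]
            have h1 : |b| / ε < N := hN
            have h2 : |b| < ε * N := by
              rwa [div_lt_iff₀ hε, mul_comm] at h1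
            calc |b| < ε * N := h2
              _ ≤ ε * ((N : ℝ) + 1 + 1) := by nlinarith
end
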